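/- Let A and B be positive definite real n×n matrices, and let H be the complex (2n)×(2n) matrix i · [[0, A^{-1/2} B^{-1/2}], [−B^{-1/2} A^{-1/2}, 0]] (blocks regarded as complex matrices entrywise). Suppose w ∈ ℝⁿ is a nonzero eigenvector of the matrix B^{-1/2} A⁻¹ B^{-1/2} with eigenvalue λ. Then λ > 0, and the complex vector w̃ ∈ ℂ^{2n} whose first n entries are w' = (i/√λ) · A^{-1/2} B^{-1/2} w and whose last n entries are w (regarded as complex), satisfies H w̃ = √λ · w̃; moreover the Euclidean norm of w' equals the Euclidean norm of w. -/

import Mathlib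

open Matrix

/-- The positive semidefinite square root of a positive semidefinite matrix, as defined in
the older Mathlib (removed since; restored here with its old definition). -/
noncomputable def Matrix.PosSemidef.sqrt {n : Type*} {𝕜 : Type*} [Fintype n] [RCLike 𝕜]
    [PartialOrder 𝕜] [DecidableEq n] {A : Matrix n n 𝕜} (hA : Matrix.PosSemidef A) : Matrix n n 𝕜 :=
  (hA.1.eigenvectorUnitary : Matrix n n 𝕜) * diagonal ((↑) ∘ (√·) ∘ hA.1.eigenvalues) *
    (star hA.1.eigenvectorUnitary : Matrix n n 𝕜)

theorem Matrix.PosSemidef.posSemidef_sqrt {n : Type*} [Fintype n] [DecidableEq n]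
    {A : Matrix n n ℝ} (hA : Matrix.PosSemidef A) : Matrix.PosSemidef hA.sqrt := by
  apply PosSemidef.mul_mul_conjTranspose_same
  refine posSemidef_diagonal_iff.mpr fun i ↦ ?_
  exact Real.sqrt_nonneg _

theorem Matrix.PosSemidef.sqrt_mul_self {n : Type*} [Fintype n] [DecidableEq n]
    {A : Matrix n n ℝ} (hA : Matrix.PosSemidef A) : hA.sqrt * hA.sqrt = A := by
  let C : Matrix n n ℝ := hA.1.eigenvectorUnitary
  let E := diagonal ((↑) ∘ (√·) ∘ hA.1.eigenvalues : n → ℝ)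
  suffices C * (E * (star C * C) * E) * star C = A by
    rw [Matrix.PosSemidef.sqrt]
    change (C * E * star C) * (C * E * star C) = A
    simpa only [← mul_assoc] using this
  have : E * E = diagonal hA.1.eigenvalues := by
    rw [diagonal_mul_diagonal]
    congr! with v
    simp [← pow_two, Real.sq_sqrt (hA.eigenvalues_nonneg v)]
  have h2 := hA.1.spectral_theorem
  rw [Unitary.conjStarAlgAut_apply] at h2
  simpa [C, this] using h2.symm

/-- From a real eigenvector `w` of `B^{-1/2} A⁻¹ B^{-1/2}` with eigenvalue `λ`, one obtains
that `λ > 0` and that the complex vector `w̃ = (w', w)`, with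
`w' = (i/√λ) · A^{-1/2} B^{-1/2} w`, is an eigenvector of
`H = i · [[0, A^{-1/2} B^{-1/2}], [−B^{-1/2} A^{-1/2}, 0]]` with eigenvalue `√λ`;
moreover `w'` and `w` have the same Euclidean norm. -/
theorem eigenvector_lift_of_blockDiag (n : ℕ) (A B : Matrix (Fin n) (Fin n) ℝ)
    (hA : A.PosDef) (hB : B.PosDef)
    (H : Matrix (Fin n ⊕ Fin n) (Fin n ⊕ Fin n) ℂ)
    (hH : H = Complex.I •
      ((Matrix.fromBlocks 0 ((hA.posSemidef.sqrt)⁻¹ * (hB.posSemidef.sqrt)⁻¹)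
        (-((hB.posSemidef.sqrt)⁻¹ * (hA.posSemidef.sqrt)⁻¹)) 0).map Complex.ofReal))
    (w : Fin n → ℝ) (hw : w ≠ 0) (lam : ℝ)
    (heig : ((hB.posSemidef.sqrt)⁻¹ * A⁻¹ * (hB.posSemidef.sqrt)⁻¹).mulVec w = lam • w)
    (w' : Fin n → ℂ)
    (hw' : w' = fun i => (Complex.I / (Real.sqrt lam : ℂ)) *
      ((((hA.posSemidef.sqrt)⁻¹ * (hB.posSemidef.sqrt)⁻¹).mulVec w i : ℝ) : ℂ)) :
    0 < lam ∧
    H.mulVec (Sum.elim w' (fun i => ((w i : ℝ) : ℂ))) =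
      ((Real.sqrt lam : ℝ) : ℂ) • Sum.elim w' (fun i => ((w i : ℝ) : ℂ)) ∧
    Real.sqrt (∑ i, ‖w' i‖ ^ 2) = Real.sqrt (∑ i, (w i) ^ 2) := by
  set Sa := hA.posSemidef.sqrt with hSadef
  set Sb := hB.posSemidef.sqrt with hSbdef
  have hSa2 : Sa * Sa = A := hA.posSemidef.sqrt_mul_self
  have hSb2 : Sb * Sb = B := hB.posSemidef.sqrt_mul_self
  have hSaT : Saᵀ = Sa := by
    have := hA.posSemidef.posSemidef_sqrt.isHermitian
    rwa [IsHermitian, conjTranspose_eq_transpose_of_trivial] at this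
  have hSbT : Sbᵀ = Sb := by
    have := hB.posSemidef.posSemidef_sqrt.isHermitian
    rwa [IsHermitian, conjTranspose_eq_transpose_of_trivial] at this
  have hAinv : A⁻¹ = Sa⁻¹ * Sa⁻¹ := by rw [← hSa2, Matrix.mul_inv_rev]
  have hdetSa : Sa.det ≠ 0 := by
    intro h
    have : A.det = 0 := by rw [← hSa2, det_mul, h, mul_zero]
    exact hA.det_pos.ne' this
  have hdetSb : Sb.det ≠ 0 := by
    intro h
    have : B.det = 0 := by rw [← hSb2, det_mul, h, mul_zero]
    exact hB.det_pos.ne' this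
  set C := Sa⁻¹ * Sb⁻¹ with hCdef
  set M := Sb⁻¹ * A⁻¹ * Sb⁻¹ with hMdef
  have hCT : Cᵀ = Sb⁻¹ * Sa⁻¹ := by
    rw [hCdef, transpose_mul, transpose_nonsing_inv, transpose_nonsing_inv, hSaT, hSbT]
  have hCTC : Cᵀ * C = M := by
    rw [hCT, hCdef, hMdef, hAinv]
    noncomm_ring
  set v := C *ᵥ w with hvdef
  have hvv : v ⬝ᵥ v = lam * (w ⬝ᵥ w) := by
    have h1 : v ⬝ᵥ v = w ⬝ᵥ (M *ᵥ w) := by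
      rw [hvdef, dotProduct_mulVec, vecMul_mulVec, hCTC, ← dotProduct_mulVec]
    rw [h1, heig, dotProduct_smul, smul_eq_mul]
  -- C is invertible, so v ≠ 0
  have hCunit : IsUnit C := by
    rw [isUnit_iff_isUnit_det, hCdef, det_mul, det_nonsing_inv, det_nonsing_inv,
      Ring.inverse_eq_inv, Ring.inverse_eq_inv]
    exact (isUnit_iff_ne_zero.mpr (inv_ne_zero hdetSa)).mul
      (isUnit_iff_ne_zero.mpr (inv_ne_zero hdetSb))
  have hvne : v ≠ 0 := by
    intro h
    apply hw
    have hinj := Matrix.mulVec_injective_iff_isUnit.mpr hCunit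
    have : C *ᵥ w = C *ᵥ 0 := by rw [mulVec_zero, ← hvdef, h]
    exact hinj this
  have hvpos : 0 < v ⬝ᵥ v := by
    have hnn : 0 ≤ v ⬝ᵥ v := by
      rw [dotProduct]; exact Finset.sum_nonneg fun i _ => mul_self_nonneg _
    rcases lt_or_eq_of_le hnn with h | h
    · exact h
    · exact absurd (dotProduct_self_eq_zero.mp h.symm) hvne
  have hwpos : 0 < w ⬝ᵥ w := by
    have hnn : 0 ≤ w ⬝ᵥ w := by
      rw [dotProduct]; exact Finset.sum_nonneg fun i _ => mul_self_nonneg _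
    rcases lt_or_eq_of_le hnn with h | h
    · exact h
    · exact absurd (dotProduct_self_eq_zero.mp h.symm) hw
  have hlam : 0 < lam := by nlinarith
  have hs0 : Real.sqrt lam ≠ 0 := (Real.sqrt_pos.mpr hlam).ne'
  have hsC : ((Real.sqrt lam : ℝ) : ℂ) ≠ 0 := by exact_mod_cast hs0
  have hss : ((Real.sqrt lam : ℝ) : ℂ) * ((Real.sqrt lam : ℝ) : ℂ) = (lam : ℂ) := by
    norm_cast
    exact Real.mul_self_sqrt hlam.le
  have key : ∀ (D : Matrix (Fin n) (Fin n) ℝ) (x : Fin n → ℝ) (i : Fin n),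
      ((D.map Complex.ofReal) *ᵥ fun j => ((x j : ℝ) : ℂ)) i = (((D *ᵥ x) i : ℝ) : ℂ) := by
    intro D x i
    simp [mulVec, dotProduct]
  have hw'2 : w' = (Complex.I / (Real.sqrt lam : ℂ)) • (fun j => ((v j : ℝ) : ℂ)) := by
    funext j
    simp [hw']
  have hCv : (Sb⁻¹ * Sa⁻¹) *ᵥ v = lam • w := by
    rw [hvdef, mulVec_mulVec, ← hCT, hCTC, heig]
  refine ⟨hlam, ?_, ?_⟩
  · subst hH
    rw [smul_mulVec]
    have hmap : ((fromBlocks 0 C (-(Sb⁻¹ * Sa⁻¹)) 0).map Complex.ofReal)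
        = fromBlocks 0 (C.map Complex.ofReal) ((-(Sb⁻¹ * Sa⁻¹)).map Complex.ofReal) 0 := by
      rw [fromBlocks_map]
      congr 1
    rw [hmap, fromBlocks_mulVec]
    funext j
    cases j with
    | inl i =>
      simp only [Pi.smul_apply, Sum.elim_inl, Pi.add_apply, zero_mulVec, Pi.zero_apply,
        zero_add, smul_eq_mul, Sum.elim_comp_inl, Sum.elim_comp_inr]
      rw [key C w i, ← hvdef, hw']
      field_simp
    | inr i =>
      simp only [Pi.smul_apply, Sum.elim_inr, Pi.add_apply, zero_mulVec, Pi.zero_apply,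
        add_zero, smul_eq_mul, Sum.elim_comp_inl, Sum.elim_comp_inr]
      rw [hw'2, mulVec_smul]
      simp only [Pi.smul_apply, smul_eq_mul]
      rw [key (-(Sb⁻¹ * Sa⁻¹)) v i, neg_mulVec, hCv]
      simp only [Pi.neg_apply, Pi.smul_apply, smul_eq_mul]
      push_cast
      field_simp
      rw [← hss]
      ring_nf
      simp [Complex.I_sq]
  · congr 1
    have hsum : ∑ i, ‖w' i‖ ^ 2 = (1 / lam) * (v ⬝ᵥ v) := by
      rw [dotProduct, Finset.mul_sum]
      refine Finset.sum_congr rfl fun i _ => ?_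
      rw [hw']
      rw [norm_mul, norm_div, Complex.norm_I, Complex.norm_real, Complex.norm_real]
      rw [Real.norm_eq_abs, Real.norm_eq_abs, abs_of_nonneg (Real.sqrt_nonneg _)]
      rw [mul_pow, div_pow, one_pow, sq_abs, Real.sq_sqrt hlam.le]
      ring
    rw [hsum, hvv]
    field_simp
    rw [dotProduct]
    refine Finset.sum_congr rfl fun i _ => ?_
    ring
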